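/- Let C₁, ..., C_N ∈ ℝ^{1×n} be mutually orthogonal unit row vectors (so each CᵢᵀCᵢ is a rank-one orthogonal projection and distinct Cᵢ are orthogonal). If the system is one-step 2s-sparse observable (every removal of 2s rows leaves ∑ CᵢᵀCᵢ positive definite), then λ₀ = min over size-s removal sets 𝒩 of λ_min(∑_{i∈𝒩}CᵢᵀCᵢ) satisfies λ₀ > s. -/

import Mathlib

open Matrix

/-- Smallest eigenvalue of a symmetric matrix, as the infimum of the Rayleigh quotient. -/
noncomputable def lambdaMin {n : ℕ} (M : Matrix (Fin n) (Fin n) ℝ) : ℝ :=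
  sInf {r : ℝ | ∃ x : Fin n → ℝ, x ≠ 0 ∧ r = x ⬝ᵥ (M *ᵥ x) / (x ⬝ᵥ x)}

/-- `λ₀`: the minimum, over all subsets obtained by removing `s` indices from
`{1,…,N}`, of the smallest eigenvalue of the remaining Gram matrix `∑_{i∈𝒩} Cᵢᵀ Cᵢ`. -/
noncomputable def lambda0 {N n : ℕ} (C : Fin N → (Fin n → ℝ)) (s : ℕ) : ℝ :=
  sInf {r : ℝ | ∃ Γ : Finset (Fin N), Γ.card = s ∧
    r = lambdaMin (∑ i ∈ Γᶜ, vecMulVec (C i) (C i))}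

private theorem quadform {N n : ℕ} (S : Finset (Fin N)) (C : Fin N → Fin n → ℝ)
    (x : Fin n → ℝ) :
    x ⬝ᵥ ((∑ i ∈ S, vecMulVec (C i) (C i)) *ᵥ x) = ∑ i ∈ S, (C i ⬝ᵥ x)^2 := by
  rw [show (∑ i ∈ S, vecMulVec (C i) (C i)) *ᵥ x
      = ∑ i ∈ S, (vecMulVec (C i) (C i) *ᵥ x) from
    map_sum (Matrix.mulVec.addMonoidHomLeft x) _ S]
  rw [show x ⬝ᵥ (∑ i ∈ S, (vecMulVec (C i) (C i) *ᵥ x))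
      = ∑ i ∈ S, x ⬝ᵥ (vecMulVec (C i) (C i) *ᵥ x) by
    simp only [dotProduct, Finset.sum_apply, Finset.mul_sum]; exact Finset.sum_comm]
  refine Finset.sum_congr rfl fun i _ => ?_
  simp only [mulVec, dotProduct, vecMulVec_apply, pow_two, Finset.mul_sum, Finset.sum_mul]
  refine Finset.sum_congr rfl fun a _ => Finset.sum_congr rfl fun b _ => by ring

/-- sufficiency direction of Lemma 3: if `C₁,…,C_N` are unit row
vectors drawn from an orthonormal family (pairwise equal or orthogonal), and the
system is one-step `2s`-sparse observable, then `λ₀ > s`. -/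
theorem stmt7 (N n s : ℕ) (hn : 0 < n) (hN : n ≤ N) (hs : 2 * s ≤ N) (C : Fin N → (Fin n → ℝ))
    (hunit : ∀ i, C i ⬝ᵥ C i = 1)
    (horth : ∀ i j, C i = C j ∨ C i ⬝ᵥ C j = 0)
    (hobs : ∀ Γ : Finset (Fin N), Γ.card = 2 * s →
      (∑ i ∈ Γᶜ, vecMulVec (C i) (C i)).PosDef) :
    (s : ℝ) < lambda0 C s := by
  classical
  -- the set of distinct rows
  set D : Finset (Fin n → ℝ) := Finset.image C Finset.univ with hD
  have hmemD : ∀ i, C i ∈ D := fun i => Finset.mem_image_of_mem C (Finset.mem_univ i)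
  have hCne : ∀ i j, C i ≠ C j → C i ⬝ᵥ C j = 0 := fun i j h => (horth i j).resolve_left h
  -- each full fiber has at least 2s+1 elements
  have hfiber : ∀ v ∈ D, 2 * s + 1 ≤ (Finset.univ.filter (fun i => C i = v)).card := by
    intro v hv
    obtain ⟨i₀, _, rfl⟩ := Finset.mem_image.1 hv
    by_contra hlt
    push_neg at hlt
    have hle : (Finset.univ.filter (fun i => C i = C i₀)).card ≤ 2 * s :=
      Nat.lt_succ_iff.mp hlt
    obtain ⟨Γ, hsub, -, hcard⟩ := Finset.exists_subsuperset_card_eq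
      (s := Finset.univ.filter (fun i => C i = C i₀)) (t := (Finset.univ : Finset (Fin N)))
      (Finset.subset_univ _) hle (by simpa using hs)
    have hpd := hobs Γ hcard
    have hvne : C i₀ ≠ 0 := by
      intro h; have := hunit i₀; rw [h] at this; simp at this
    have hpos := hpd.dotProduct_mulVec_pos hvne
    have hzero : (C i₀) ⬝ᵥ ((∑ i ∈ Γᶜ, vecMulVec (C i) (C i)) *ᵥ C i₀) = 0 := by
      rw [quadform]
      refine Finset.sum_eq_zero fun i hi => ?_
      have hiΓ : i ∉ Γ := Finset.mem_compl.mp hi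
      have hine : C i ≠ C i₀ := by
        intro h
        exact hiΓ (hsub (Finset.mem_filter.mpr ⟨Finset.mem_univ i, h⟩))
      rw [hCne i i₀ hine]; ring
    rw [show star (C i₀) = C i₀ from rfl] at hpos
    rw [hzero] at hpos
    exact lt_irrefl 0 hpos
  -- linear maps for Parseval
  let φ : (Fin n → ℝ) →ₗ[ℝ] (↥D → ℝ) :=
    { toFun := fun x v => (v : Fin n → ℝ) ⬝ᵥ x
      map_add' := fun x y => by funext v; simp [dotProduct_add]
      map_smul' := fun c x => by funext v; simp [dotProduct_smul] }
  let ψ : (↥D → ℝ) →ₗ[ℝ] (Fin n → ℝ) :=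
    { toFun := fun c => ∑ v : ↥D, c v • (v : Fin n → ℝ)
      map_add' := fun c d => by
        simp [add_smul, Finset.sum_add_distrib]
      map_smul' := fun r c => by
        simp [Finset.smul_sum, smul_smul] }
  have hDunit : ∀ v : ↥D, (v : Fin n → ℝ) ⬝ᵥ (v : Fin n → ℝ) = 1 := by
    rintro ⟨v, hv⟩
    obtain ⟨i, _, rfl⟩ := Finset.mem_image.1 hv
    exact hunit i
  have hDorth : ∀ v w : ↥D, v ≠ w → (v : Fin n → ℝ) ⬝ᵥ (w : Fin n → ℝ) = 0 := by
    rintro ⟨v, hv⟩ ⟨w, hw⟩ hne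
    obtain ⟨i, _, rfl⟩ := Finset.mem_image.1 hv
    obtain ⟨j, _, rfl⟩ := Finset.mem_image.1 hw
    exact hCne i j (by simpa using hne)
  have hφψ : ∀ c, φ (ψ c) = c := by
    intro c
    funext v
    show (v : Fin n → ℝ) ⬝ᵥ (∑ w : ↥D, c w • (w : Fin n → ℝ)) = c v
    rw [show (v : Fin n → ℝ) ⬝ᵥ (∑ w : ↥D, c w • (w : Fin n → ℝ))
        = ∑ w : ↥D, c w * ((v : Fin n → ℝ) ⬝ᵥ (w : Fin n → ℝ)) by
      simp only [dotProduct, Finset.sum_apply, Pi.smul_apply, smul_eq_mul, Finset.mul_sum]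
      rw [Finset.sum_comm]
      exact Finset.sum_congr rfl fun w _ => Finset.sum_congr rfl fun a _ => by ring]
    rw [Finset.sum_eq_single v]
    · rw [hDunit v]; ring
    · intro w _ hne; rw [hDorth v w (Ne.symm hne)]; ring
    · intro h; exact absurd (Finset.mem_univ v) h
  -- φ is injective using positive definiteness
  have hφinj : Function.Injective φ := by
    rw [injective_iff_map_eq_zero]
    intro x hx
    by_contra hxne
    obtain ⟨Γ, -, hcard⟩ := Finset.exists_subset_card_eq (s := (Finset.univ : Finset (Fin N))) (n := 2 * s)
      (by simpa using hs)
    have hpd := hobs Γ hcard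
    have hpos := hpd.dotProduct_mulVec_pos hxne
    rw [show star x = x from rfl, quadform] at hpos
    have : ∑ i ∈ Γᶜ, (C i ⬝ᵥ x)^2 = 0 := by
      refine Finset.sum_eq_zero fun i _ => ?_
      have : φ x ⟨C i, hmemD i⟩ = 0 := by rw [hx]; rfl
      have hz : C i ⬝ᵥ x = 0 := this
      rw [hz]; ring
    rw [this] at hpos
    exact lt_irrefl 0 hpos
  have hψφ : ∀ x, ψ (φ x) = x := fun x => hφinj (by rw [hφψ])
  -- Parseval
  have hpars : ∀ x : Fin n → ℝ, ∑ v : ↥D, ((v : Fin n → ℝ) ⬝ᵥ x)^2 = x ⬝ᵥ x := by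
    intro x
    conv_rhs => rw [show x ⬝ᵥ x = x ⬝ᵥ ψ (φ x) by rw [hψφ]]
    show _ = x ⬝ᵥ (∑ v : ↥D, ((v : Fin n → ℝ) ⬝ᵥ x) • (v : Fin n → ℝ))
    rw [show x ⬝ᵥ (∑ v : ↥D, ((v : Fin n → ℝ) ⬝ᵥ x) • (v : Fin n → ℝ))
        = ∑ v : ↥D, ((v : Fin n → ℝ) ⬝ᵥ x) * (x ⬝ᵥ (v : Fin n → ℝ)) by
      simp only [dotProduct, Finset.sum_apply, Pi.smul_apply, smul_eq_mul, Finset.mul_sum]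
      rw [Finset.sum_comm]
      exact Finset.sum_congr rfl fun w _ => Finset.sum_congr rfl fun a _ => by ring]
    exact Finset.sum_congr rfl fun v _ => by rw [dotProduct_comm x]; ring
  -- main quadratic form lower bound
  have hmain : ∀ Γ : Finset (Fin N), Γ.card = s → ∀ x : Fin n → ℝ,
      ((s : ℝ) + 1) * (x ⬝ᵥ x) ≤ x ⬝ᵥ ((∑ i ∈ Γᶜ, vecMulVec (C i) (C i)) *ᵥ x) := by
    intro Γ hΓ x
    rw [quadform]
    have hgroup : ∑ i ∈ Γᶜ, (C i ⬝ᵥ x)^2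
        = ∑ v ∈ D, ∑ i ∈ Γᶜ.filter (fun i => C i = v), ((v : Fin n → ℝ) ⬝ᵥ x)^2 := by
      exact (Finset.sum_fiberwise_of_maps_to' (fun i _ => hmemD i)
        (fun v => (v ⬝ᵥ x)^2)).symm
    rw [hgroup]
    have hcardfib : ∀ v ∈ D, s + 1 ≤ (Γᶜ.filter (fun i => C i = v)).card := by
      intro v hv
      have h1 : Γᶜ.filter (fun i => C i = v)
          = (Finset.univ.filter (fun i => C i = v)) \ Γ := by
        ext i
        simp [Finset.mem_filter, Finset.mem_sdiff, Finset.mem_compl, and_comm]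
      have h2 := Finset.card_le_card_sdiff_add_card
        (s := Finset.univ.filter (fun i => C i = v)) (t := Γ)
      have h3 := hfiber v hv
      rw [h1]
      omega
    have hsum1 : ∀ v ∈ D, ∑ i ∈ Γᶜ.filter (fun i => C i = v), ((v : Fin n → ℝ) ⬝ᵥ x)^2
        = ((Γᶜ.filter (fun i => C i = v)).card : ℝ) * (v ⬝ᵥ x)^2 := by
      intro v _
      rw [Finset.sum_const, nsmul_eq_mul]
    calc ((s : ℝ) + 1) * (x ⬝ᵥ x)
        = ∑ v ∈ D, ((s : ℝ) + 1) * ((v : Fin n → ℝ) ⬝ᵥ x)^2 := by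
          rw [← Finset.mul_sum]
          congr 1
          rw [← hpars x, ← Finset.sum_coe_sort D (fun v => ((v : Fin n → ℝ) ⬝ᵥ x)^2)]
      _ ≤ ∑ v ∈ D, ∑ i ∈ Γᶜ.filter (fun i => C i = v), ((v : Fin n → ℝ) ⬝ᵥ x)^2 := by
          refine Finset.sum_le_sum fun v hv => ?_
          rw [hsum1 v hv]
          have hc := hcardfib v hv
          have : ((s : ℝ) + 1) ≤ ((Γᶜ.filter (fun i => C i = v)).card : ℝ) := by
            exact_mod_cast hc
          exact mul_le_mul_of_nonneg_right this (sq_nonneg _)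
  -- lower bound on lambdaMin
  have hlmin : ∀ Γ : Finset (Fin N), Γ.card = s →
      (s : ℝ) + 1 ≤ lambdaMin (∑ i ∈ Γᶜ, vecMulVec (C i) (C i)) := by
    intro Γ hΓ
    apply le_csInf
    · refine ⟨_, ⟨fun _ => 1, ?_, rfl⟩⟩
      intro h
      have := congrFun h ⟨0, hn⟩
      simp at this
    · rintro r ⟨x, hx, rfl⟩
      have hxx0 : 0 ≤ x ⬝ᵥ x := by
        unfold dotProduct
        exact Finset.sum_nonneg fun i _ => mul_self_nonneg _
      have hxx : 0 < x ⬝ᵥ x :=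
        lt_of_le_of_ne hxx0 (fun h => hx (dotProduct_self_eq_zero.mp h.symm))
      rw [le_div_iff₀ hxx]
      exact hmain Γ hΓ x
  -- conclude
  have h1 : (s : ℝ) < (s : ℝ) + 1 := by linarith
  refine lt_of_lt_of_le h1 (le_csInf ?_ ?_)
  · obtain ⟨Γ, -, hΓ⟩ := Finset.exists_subset_card_eq
      (s := (Finset.univ : Finset (Fin N))) (n := s) (by simp; omega)
    exact ⟨_, Γ, hΓ, rfl⟩
  · rintro r ⟨Γ, hΓ, rfl⟩
    exact hlmin Γ hΓ
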